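/- arXiv:2108.10411 — 3 statements merged into one kernel-verified Lean document; each statement's English description precedes it below -/
import Mathlib

section
/- Let K⁰, K¹, …, K^L be real symmetric positive definite n×n matrices, where K^l has smallest eigenvalue σ_{l,n} > 0, and let λ > 0. Define vectors d⁰ ∈ ℝⁿ arbitrary and d^{l+1} = (I − K^l (K^l + nλ I)^{-1}) d^l for l = 0, …, L. Then ‖d^{L+1}‖ ≤ (∏_{l=0}^{L} (1 − ε(l))) · ‖d⁰‖, where ε(l) = σ_{l,n} / (nλ + σ_{l,n}) and ‖·‖ is the Euclidean norm on ℝⁿ. -/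
/-- The Euclidean norm on `ℝⁿ`. -/
noncomputable def euclNorm {n : ℕ} (v : Fin n → ℝ) : ℝ :=
  Real.sqrt (∑ i, (v i) ^ 2)

open Matrix

lemma unitary_dot {n : ℕ} {W : Matrix (Fin n) (Fin n) ℝ} (h : star W * W = 1) (x : Fin n → ℝ) :
    (W *ᵥ x) ⬝ᵥ (W *ᵥ x) = x ⬝ᵥ x := by
  rw [dotProduct_mulVec, ← mulVec_transpose, mulVec_mulVec]
  rw [show Wᵀ = star W from (Matrix.star_eq_conjTranspose W ▸ (Matrix.conjTranspose_eq_transpose_of_trivial W)).symm]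
  rw [h, one_mulVec]

lemma unitary_sumsq {n : ℕ} {W : Matrix (Fin n) (Fin n) ℝ} (h : star W * W = 1) (x : Fin n → ℝ) :
    ∑ i, (W *ᵥ x) i ^ 2 = ∑ i, x i ^ 2 := by
  have := unitary_dot h x
  simpa [dotProduct, pow_two] using this

lemma conjMulAux {n : ℕ} {U : Matrix (Fin n) (Fin n) ℝ} (hU : star U * U = 1)
    (f g : Fin n → ℝ) :
    (U * diagonal f * star U) * (U * diagonal g * star U)
      = U * diagonal (fun i => f i * g i) * star U := by
  calc (U * diagonal f * star U) * (U * diagonal g * star U)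
      = U * diagonal f * ((star U * U) * (diagonal g * star U)) := by
        simp only [mul_assoc]
    _ = U * diagonal f * (diagonal g * star U) := by rw [hU, one_mul]
    _ = U * (diagonal f * diagonal g) * star U := by simp only [mul_assoc]
    _ = U * diagonal (fun i => f i * g i) * star U := by
        rw [diagonal_mul_diagonal]

lemma step {n : ℕ} {K : Matrix (Fin n) (Fin n) ℝ} (hpd : K.PosDef)
    {σ c : ℝ} (hσ : 0 < σ) (hc : 0 ≤ c)
    (hle : IsLeast (Set.range hpd.1.eigenvalues) σ) (v : Fin n → ℝ) :
    euclNorm ((1 - K * (K + c • 1)⁻¹) *ᵥ v) ≤ (1 - σ / (c + σ)) * euclNorm v := by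
  have hH := hpd.1
  set U : Matrix (Fin n) (Fin n) ℝ := (hH.eigenvectorUnitary : Matrix (Fin n) (Fin n) ℝ) with hUdef
  set lm := hH.eigenvalues with hlmdef
  have hUU : star U * U = 1 := Unitary.coe_star_mul_self hH.eigenvectorUnitary
  have hUUs : U * star U = 1 := Unitary.coe_mul_star_self hH.eigenvectorUnitary
  have hspec : K = U * diagonal lm * star U := by
    have := hH.spectral_theorem
    simpa [RCLike.ofReal_real_eq_id] using this
  have hcσ : 0 < c + σ := by linarith
  have hlamσ : ∀ i, σ ≤ lm i := fun i => hle.2 ⟨i, rfl⟩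
  have hposl : ∀ i, 0 < lm i + c := fun i => by have := hlamσ i; linarith
  have hone : (1 : Matrix (Fin n) (Fin n) ℝ) = U * diagonal (fun _ => (1:ℝ)) * star U := by
    rw [diagonal_one, mul_one, hUUs]
  have hKc : K + c • 1 = U * diagonal (fun i => lm i + c) * star U := by
    have hD : diagonal lm + c • (diagonal fun _ => (1:ℝ)) = diagonal (fun i => lm i + c) := by
      ext i j
      by_cases h : i = j <;> simp [Matrix.diagonal_apply, h]
    rw [hspec, hone, ← smul_mul_assoc, ← mul_smul_comm, ← Matrix.add_mul, ← Matrix.mul_add, hD]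
  have hinv : (K + c • 1)⁻¹ = U * diagonal (fun i => (lm i + c)⁻¹) * star U := by
    apply Matrix.inv_eq_right_inv
    rw [hKc, conjMulAux hUU]
    rw [show (fun i => (lm i + c) * (lm i + c)⁻¹) = fun _ => (1:ℝ) by
      funext i; exact mul_inv_cancel₀ (hposl i).ne']
    rw [← hone]
  have hM : (1 : Matrix (Fin n) (Fin n) ℝ) - K * (K + c • 1)⁻¹
      = U * diagonal (fun i => c / (lm i + c)) * star U := by
    have hD : (diagonal fun _ => (1:ℝ)) - diagonal (fun i => lm i * (lm i + c)⁻¹)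
        = diagonal (fun i => c / (lm i + c)) := by
      ext i j
      by_cases h : i = j
      · subst h
        have hne := (hposl i).ne'
        simp only [Matrix.diagonal_apply_eq, Matrix.sub_apply]
        field_simp
        ring
      · simp [Matrix.diagonal_apply, h]
    rw [hinv, hspec, conjMulAux hUU, hone, ← Matrix.sub_mul, ← Matrix.mul_sub, hD]
  rw [hM]
  -- norm computation
  set g : Fin n → ℝ := fun i => c / (lm i + c) with hgdef
  set a : ℝ := c / (c + σ) with hadef
  have ha0 : 0 ≤ a := div_nonneg hc hcσ.le
  have hga : ∀ i, 0 ≤ g i ∧ g i ≤ a := by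
    intro i
    constructor
    · exact div_nonneg hc (hposl i).le
    · apply div_le_div_of_nonneg_left hc hcσ
      have := hlamσ i; linarith
  have hstarU : star (star U) * star U = 1 := by rw [star_star]; exact hUUs
  have hmv : (U * diagonal g * star U) *ᵥ v = U *ᵥ (diagonal g *ᵥ (star U *ᵥ v)) := by
    rw [mulVec_mulVec, mulVec_mulVec]
  set w := star U *ᵥ v with hwdef
  have hsum : ∑ i, ((U * diagonal g * star U) *ᵥ v) i ^ 2 ≤ a ^ 2 * ∑ i, v i ^ 2 := by
    rw [hmv, unitary_sumsq hUU]
    have h1 : ∑ i, (diagonal g *ᵥ w) i ^ 2 ≤ a ^ 2 * ∑ i, w i ^ 2 := by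
      rw [Finset.mul_sum]
      apply Finset.sum_le_sum
      intro i _
      rw [mulVec_diagonal, mul_pow]
      exact mul_le_mul_of_nonneg_right (pow_le_pow_left₀ (hga i).1 (hga i).2 2) (sq_nonneg _)
    calc ∑ i, (diagonal g *ᵥ w) i ^ 2 ≤ a ^ 2 * ∑ i, w i ^ 2 := h1
      _ = a ^ 2 * ∑ i, v i ^ 2 := by rw [hwdef, unitary_sumsq hstarU]
  have hfac : 1 - σ / (c + σ) = a := by
    rw [hadef, eq_div_iff hcσ.ne', sub_mul, div_mul_cancel₀ _ hcσ.ne']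
    ring
  rw [hfac]
  unfold euclNorm
  calc Real.sqrt (∑ i, ((U * diagonal g * star U) *ᵥ v) i ^ 2)
      ≤ Real.sqrt (a ^ 2 * ∑ i, v i ^ 2) := Real.sqrt_le_sqrt hsum
    _ = a * Real.sqrt (∑ i, v i ^ 2) := by
        rw [Real.sqrt_mul (sq_nonneg a), Real.sqrt_sq ha0]

/-- Convergence of the Laplacian pyramid residuals (Theorem `LP_KRR_convergence`):
if `d^{l+1} = (I - K^l (K^l + nλI)⁻¹) d^l` and `σ l` is the smallest eigenvalue of the
symmetric positive definite matrix `K^l`, then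
`‖d^{L+1}‖ ≤ ∏_{l=0}^{L} (1 - ε(l)) · ‖d⁰‖` with `ε(l) = σ l / (nλ + σ l)`. -/
theorem lp_krr_convergence {n : ℕ} (L : ℕ) (lam : ℝ) (hlam : 0 < lam)
    (K : ℕ → Matrix (Fin n) (Fin n) ℝ)
    (hsymm : ∀ l ≤ L, (K l).IsSymm)
    (hpd : ∀ l, l ≤ L → (K l).PosDef)
    (σ : ℕ → ℝ)
    (hσpos : ∀ l ≤ L, 0 < σ l)
    (hσ : ∀ l, (hl : l ≤ L) →
      IsLeast (Set.range (hpd l hl).1.eigenvalues) (σ l))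
    (d : ℕ → (Fin n → ℝ))
    (hd : ∀ l ≤ L,
      d (l + 1) = (1 - K l * (K l + ((n : ℝ) * lam) • 1)⁻¹).mulVec (d l)) :
    euclNorm (d (L + 1)) ≤
      (∏ l ∈ Finset.range (L + 1), (1 - σ l / ((n : ℝ) * lam + σ l))) * euclNorm (d 0) := by
  have hc : 0 ≤ (n : ℝ) * lam := by positivity
  induction L with
  | zero =>
    rw [hd 0 le_rfl]
    simpa using step (hpd 0 le_rfl) (hσpos 0 le_rfl) hc (hσ 0 le_rfl) (d 0)
  | succ L ih =>
    have hL : L + 1 ≤ L + 1 := le_rfl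
    have h1 : euclNorm (d (L + 1 + 1)) ≤
        (1 - σ (L + 1) / ((n : ℝ) * lam + σ (L + 1))) * euclNorm (d (L + 1)) := by
      rw [hd (L + 1) le_rfl]
      exact step (hpd (L + 1) le_rfl) (hσpos (L + 1) le_rfl) hc (hσ (L + 1) le_rfl) _
    have h2 := ih (fun l hl => hsymm l (hl.trans (Nat.le_succ L)))
      (fun l hl => hpd l (hl.trans (Nat.le_succ L)))
      (fun l hl => hσpos l (hl.trans (Nat.le_succ L)))
      (fun l hl => hσ l (hl.trans (Nat.le_succ L)))
      (fun l hl => hd l (hl.trans (Nat.le_succ L)))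
    have hσp := hσpos (L + 1) le_rfl
    have hden : 0 < (n : ℝ) * lam + σ (L + 1) := by linarith
    have hf : 0 ≤ 1 - σ (L + 1) / ((n : ℝ) * lam + σ (L + 1)) := by
      rw [sub_nonneg]
      exact div_le_one_of_le₀ (by linarith) hden.le
    calc euclNorm (d (L + 1 + 1))
        ≤ (1 - σ (L + 1) / ((n : ℝ) * lam + σ (L + 1))) * euclNorm (d (L + 1)) := h1
      _ ≤ (1 - σ (L + 1) / ((n : ℝ) * lam + σ (L + 1))) *
          ((∏ l ∈ Finset.range (L + 1), (1 - σ l / ((n : ℝ) * lam + σ l))) * euclNorm (d 0)) :=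
          mul_le_mul_of_nonneg_left h2 hf
      _ = (∏ l ∈ Finset.range (L + 1 + 1), (1 - σ l / ((n : ℝ) * lam + σ l))) * euclNorm (d 0) := by
          conv_rhs => rw [Finset.prod_range_succ]
          rw [← mul_assoc,
            mul_comm (1 - σ (L + 1) / ((n : ℝ) * lam + σ (L + 1)))
              (∏ l ∈ Finset.range (L + 1), (1 - σ l / ((n : ℝ) * lam + σ l)))]
end

section
/- Let K be a real symmetric positive semidefinite n×n matrix, λ > 0, and σ_cutoff > 0. Suppose d ∈ ℝⁿ lies in the span of eigenvectors of K whose eigenvalues are at least σ_cutoff. Then ‖(I − K(K + nλ I)^{-1}) d‖ ≤ (nλ/(nλ + σ_cutoff)) · ‖d‖, where ‖·‖ is the Euclidean norm. -/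
open Matrix


/-- Spectrally band-limited residuals (Corollary `spectrally_bandlim_res`):
if `K` is symmetric positive semidefinite, `λ > 0`, and `d` lies in the span of the
eigenvectors of `K` with eigenvalue at least `σ_cutoff > 0`, then
`‖(I - K (K + nλI)⁻¹) d‖ ≤ (nλ / (nλ + σ_cutoff)) ‖d‖`. -/
theorem bandlimited_residual_contraction {n : ℕ} (K : Matrix (Fin n) (Fin n) ℝ)
    (hpsd : K.PosSemidef) (lam : ℝ) (hlam : 0 < lam)
    (σcut : ℝ) (hσcut : 0 < σcut)
    (d : Fin n → ℝ)
    (hd : d ∈ Submodule.span ℝ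
      {v : Fin n → ℝ | ∃ σ : ℝ, σcut ≤ σ ∧ K.mulVec v = σ • v}) :
    euclNorm ((1 - K * (K + ((n : ℝ) * lam) • 1)⁻¹).mulVec d) ≤
      ((n : ℝ) * lam / ((n : ℝ) * lam + σcut)) * euclNorm d := by
  rcases Nat.eq_zero_or_pos n with hn | hn
  · subst hn
    simp [euclNorm]
  set μ : ℝ := (n : ℝ) * lam with hμdef
  have hμ : 0 < μ := mul_pos (by exact_mod_cast hn) hlam
  have hH := hpsd.1
  set b := hH.eigenvectorBasis with hb
  set eig := hH.eigenvalues with heig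
  have heignn : ∀ i, 0 ≤ eig i := hpsd.eigenvalues_nonneg
  have hden : ∀ i, 0 < eig i + μ := fun i => add_pos_of_nonneg_of_pos (heignn i) hμ
  set A := K + μ • (1 : Matrix (Fin n) (Fin n) ℝ) with hA
  have hApos : A.PosDef := Matrix.PosDef.posSemidef_add hpsd (by
    rw [Matrix.smul_one_eq_diagonal]
    exact Matrix.posDef_diagonal_iff.2 fun _ => hμ)
  have hdet : IsUnit A.det := hApos.det_pos.ne'.isUnit
  -- the operator equals μ • A⁻¹
  have h1 : (1 - K * A⁻¹) = μ • A⁻¹ := by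
    have hK : K = A - μ • (1 : Matrix (Fin n) (Fin n) ℝ) := by rw [hA, add_sub_cancel_right]
    rw [hK, Matrix.sub_mul, Matrix.mul_nonsing_inv A hdet, Matrix.smul_mul, Matrix.one_mul,
      sub_sub_cancel]
  -- eigen-action of A and A⁻¹
  have hAeig : ∀ i, A *ᵥ ⇑(b i) = (eig i + μ) • ⇑(b i) := by
    intro i
    rw [hA, Matrix.add_mulVec, Matrix.smul_mulVec, Matrix.one_mulVec, add_smul,
      hH.mulVec_eigenvectorBasis]
  have hAinv : ∀ i, A⁻¹ *ᵥ ⇑(b i) = (eig i + μ)⁻¹ • ⇑(b i) := by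
    intro i
    have h2 : (eig i + μ) • (A⁻¹ *ᵥ ⇑(b i)) = ⇑(b i) := by
      rw [← Matrix.mulVec_smul, ← hAeig i, Matrix.mulVec_mulVec,
        Matrix.nonsing_inv_mul A hdet, Matrix.one_mulVec]
    calc A⁻¹ *ᵥ ⇑(b i) = (eig i + μ)⁻¹ • ((eig i + μ) • (A⁻¹ *ᵥ ⇑(b i))) := by
          rw [smul_smul, inv_mul_cancel₀ (hden i).ne', one_smul]
      _ = (eig i + μ)⁻¹ • ⇑(b i) := by rw [h2]
  -- pass to EuclideanSpace
  set e := (WithLp.equiv 2 (Fin n → ℝ)).symm with he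
  have hnorm : ∀ v : Fin n → ℝ, euclNorm v = ‖e v‖ := by
    intro v
    rw [EuclideanSpace.norm_eq]
    simp [euclNorm, Real.norm_eq_abs, sq_abs, he, WithLp.equiv_symm_apply, PiLp.toLp_apply]
  have hrepr : ∀ (v : Fin n → ℝ) (i : Fin n), b.repr (e v) i = ⇑(b i) ⬝ᵥ v := by
    intro v i
    rw [b.repr_apply_apply]
    simp [dotProduct, PiLp.inner_apply, RCLike.inner_apply, mul_comm, he, WithLp.equiv_symm_apply, PiLp.toLp_apply]
  set c : Fin n → ℝ := fun i => ⇑(b i) ⬝ᵥ d with hc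
  -- vanishing of low-frequency coefficients
  have hvanish : ∀ i, eig i < σcut → c i = 0 := by
    intro i hi
    refine Submodule.span_induction (p := fun v _ => ⇑(b i) ⬝ᵥ v = 0) ?_ ?_ ?_ ?_ hd
    · rintro v ⟨σ, hσ, hv⟩
      have h3 : eig i * (⇑(b i) ⬝ᵥ v) = σ * (⇑(b i) ⬝ᵥ v) := by
        have hKT : K.transpose = K := by
          ext a b'
          simpa using congrFun (congrFun hH.eq a) b'
        have h4 : ⇑(b i) ⬝ᵥ (K *ᵥ v) = (K *ᵥ ⇑(b i)) ⬝ᵥ v := by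
          rw [Matrix.dotProduct_mulVec, ← Matrix.mulVec_transpose, hKT]
        rw [hv, dotProduct_smul, smul_eq_mul] at h4
        rw [hH.mulVec_eigenvectorBasis, smul_dotProduct, smul_eq_mul] at h4
        exact h4.symm
      have hne : eig i ≠ σ := fun h => absurd (h ▸ hi) (not_lt.2 hσ)
      by_contra h0
      exact hne (mul_right_cancel₀ h0 h3)
    · exact dotProduct_zero _
    · intro x y _ _ hx hy
      rw [dotProduct_add, hx, hy, add_zero]
    · intro a x _ hx
      rw [dotProduct_smul, hx, smul_zero]
  -- coefficients of the image
  have himg : ∀ i, b.repr (e ((1 - K * A⁻¹) *ᵥ d)) i = μ * (eig i + μ)⁻¹ * c i := by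
    intro i
    rw [hrepr]
    rw [h1, Matrix.smul_mulVec, dotProduct_smul]
    have hsym : A⁻¹.transpose = A⁻¹ := hApos.1.inv
    rw [Matrix.dotProduct_mulVec, ← Matrix.mulVec_transpose, hsym, hAinv i,
      smul_dotProduct]
    simp [hc, smul_eq_mul, mul_comm, mul_assoc, mul_left_comm]
  -- Parseval
  have hnorm2 : ∀ v : Fin n → ℝ,
      euclNorm v = Real.sqrt (∑ i, (b.repr (e v) i) ^ 2) := by
    intro v
    rw [hnorm, ← (b.repr).norm_map (e v), EuclideanSpace.norm_eq]
    simp [Real.norm_eq_abs, sq_abs]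
  set r := μ / (μ + σcut) with hr
  have hrpos : 0 < r := div_pos hμ (by positivity)
  rw [hnorm2, hnorm2]
  have hle : ∑ i, (b.repr (e ((1 - K * A⁻¹) *ᵥ d)) i) ^ 2
      ≤ ∑ i, r ^ 2 * (b.repr (e d) i) ^ 2 := by
    apply Finset.sum_le_sum
    intro i _
    rw [himg i, hrepr d i]
    by_cases h0 : ⇑(b i) ⬝ᵥ d = 0
    · rw [(show c i = ⇑(b i) ⬝ᵥ d from rfl), h0]
      simp
    · have hge : σcut ≤ eig i := le_of_not_gt fun h => h0 (hvanish i h)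
      have hfac : μ * (eig i + μ)⁻¹ ≤ r := by
        rw [← div_eq_mul_inv, hr,
          div_le_div_iff₀ (hden i) (by positivity : (0:ℝ) < μ + σcut)]
        nlinarith [hμ.le, hge]
      have hfac0 : 0 ≤ μ * (eig i + μ)⁻¹ :=
        mul_nonneg hμ.le (inv_nonneg.2 (hden i).le)
      calc (μ * (eig i + μ)⁻¹ * c i) ^ 2
          = (μ * (eig i + μ)⁻¹) ^ 2 * (c i) ^ 2 := by ring
        _ ≤ r ^ 2 * (c i) ^ 2 := by
            have := pow_le_pow_left₀ hfac0 hfac 2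
            exact mul_le_mul_of_nonneg_right this (sq_nonneg _)
  calc Real.sqrt (∑ i, (b.repr (e ((1 - K * A⁻¹) *ᵥ d)) i) ^ 2)
      ≤ Real.sqrt (∑ i, r ^ 2 * (b.repr (e d) i) ^ 2) := Real.sqrt_le_sqrt hle
    _ = r * Real.sqrt (∑ i, (b.repr (e d) i) ^ 2) := by
        rw [← Finset.mul_sum, Real.sqrt_mul (by positivity), Real.sqrt_sq hrpos.le]
end

section
/- Let C₁ > 0, C₂ > 0 and D > 0 be real constants, and define B : ℝ → ℝ by B(l) = C₁ · 2^{−Dl} · exp(−C₂ · 4^{−l}). Then B attains its global maximum at l* = (1/2) log₂(C₂ ln 4 / (D ln 2)), and B is strictly monotonically increasing on the interval (−∞, l*). -/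
/-- The eigenvalue lower bound `B(l) = C₁ 2^{-Dl} exp(-C₂ 4^{-l})` attains its global maximum
at `l* = (1/2) log₂(C₂ ln 4/(D ln 2))` and is strictly increasing on `(-∞, l*)`. -/
theorem B_max_and_monotone (C₁ C₂ D : ℝ) (hC₁ : 0 < C₁) (hC₂ : 0 < C₂) (hD : 0 < D)
    (B : ℝ → ℝ)
    (hB : ∀ l : ℝ, B l = C₁ * (2 : ℝ) ^ (-(D * l)) * Real.exp (-C₂ * (4 : ℝ) ^ (-l))) :
    (∀ l : ℝ, B l ≤ B ((1 / 2) * Real.logb 2 (C₂ * Real.log 4 / (D * Real.log 2)))) ∧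
      StrictMonoOn B
        (Set.Iio ((1 / 2) * Real.logb 2 (C₂ * Real.log 4 / (D * Real.log 2)))) := by
  set L : ℝ := (1 / 2) * Real.logb 2 (C₂ * Real.log 4 / (D * Real.log 2)) with hL
  have hlog2 : (0:ℝ) < Real.log 2 := Real.log_pos (by norm_num)
  have hlog4 : (0:ℝ) < Real.log 4 := Real.log_pos (by norm_num)
  have hlog4' : Real.log 4 = 2 * Real.log 2 := by
    have : (4:ℝ) = 2 ^ (2:ℕ) := by norm_num
    rw [this, Real.log_pow]; push_cast; ring
  have hKpos : (0:ℝ) < C₂ * Real.log 4 / (D * Real.log 2) := by positivity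
  -- rewrite B in exponential form
  set g : ℝ → ℝ := fun l => Real.log 2 * -(D * l) + -C₂ * Real.exp (Real.log 4 * -l) with hg
  have hB' : ∀ l, B l = C₁ * Real.exp (g l) := by
    intro l
    rw [hB, Real.rpow_def_of_pos (by norm_num : (0:ℝ) < 2),
      Real.rpow_def_of_pos (by norm_num : (0:ℝ) < 4), mul_assoc, ← Real.exp_add]
  -- the key value of the exponential
  have hexpL : Real.exp (Real.log 4 * -L) = D * Real.log 2 / (C₂ * Real.log 4) := by
    have : Real.log 4 * -L = -Real.log (C₂ * Real.log 4 / (D * Real.log 2)) := by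
      rw [hL, Real.logb, hlog4']
      field_simp
    rw [this, Real.exp_neg, Real.exp_log hKpos, inv_div]
  -- derivative of g
  have hderiv : ∀ l : ℝ, HasDerivAt g
      (C₂ * Real.log 4 * Real.exp (Real.log 4 * -l) - D * Real.log 2) l := by
    intro l
    have h1 : HasDerivAt (fun x : ℝ => Real.log 4 * -x) (-Real.log 4) l := by
      simpa using ((hasDerivAt_id l).neg.const_mul (Real.log 4))
    have h2 := (h1.exp).const_mul (-C₂)
    have h3 : HasDerivAt (fun x : ℝ => Real.log 2 * -(D * x)) (-(Real.log 2 * D)) l := by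
      have := ((hasDerivAt_id l).const_mul D).neg.const_mul (Real.log 2)
      simpa using this
    have := h3.add h2
    exact this.congr_deriv (by ring)
  -- strict monotonicity of g on Iic L
  have hgmono : StrictMonoOn g (Set.Iic L) := by
    apply strictMonoOn_of_deriv_pos (convex_Iic L)
    · exact Continuous.continuousOn (by fun_prop)
    · intro x hx
      rw [interior_Iic] at hx
      rw [(hderiv x).deriv]
      have h1 : Real.exp (Real.log 4 * -L) < Real.exp (Real.log 4 * -x) := by
        apply Real.exp_lt_exp.2
        have : -L < -x := by linarith [hx.out]
        nlinarith
      have h2 : D * Real.log 2 < C₂ * Real.log 4 * Real.exp (Real.log 4 * -x) := by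
        calc D * Real.log 2 = C₂ * Real.log 4 * (D * Real.log 2 / (C₂ * Real.log 4)) := by
              field_simp
          _ = C₂ * Real.log 4 * Real.exp (Real.log 4 * -L) := by rw [hexpL]
          _ < C₂ * Real.log 4 * Real.exp (Real.log 4 * -x) := by
              apply mul_lt_mul_of_pos_left h1 (by positivity)
      linarith
  -- strict antitonicity of g on Ici L
  have hganti : StrictAntiOn g (Set.Ici L) := by
    apply strictAntiOn_of_deriv_neg (convex_Ici L)
    · exact Continuous.continuousOn (by fun_prop)
    · intro x hx
      rw [interior_Ici] at hx
      rw [(hderiv x).deriv]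
      have h1 : Real.exp (Real.log 4 * -x) < Real.exp (Real.log 4 * -L) := by
        apply Real.exp_lt_exp.2
        have : -x < -L := by linarith [hx.out]
        nlinarith
      have h2 : C₂ * Real.log 4 * Real.exp (Real.log 4 * -x) < D * Real.log 2 := by
        calc C₂ * Real.log 4 * Real.exp (Real.log 4 * -x)
            < C₂ * Real.log 4 * Real.exp (Real.log 4 * -L) := by
              apply mul_lt_mul_of_pos_left h1 (by positivity)
          _ = C₂ * Real.log 4 * (D * Real.log 2 / (C₂ * Real.log 4)) := by rw [hexpL]
          _ = D * Real.log 2 := by field_simp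
      linarith
  constructor
  · intro l
    rw [hB' l, hB' L]
    have hgle : g l ≤ g L := by
      rcases le_or_gt l L with h | h
      · rcases eq_or_lt_of_le h with rfl | h'
        · exact le_refl _
        · exact (hgmono h (le_refl L) h').le
      · exact (hganti (le_refl L) h.le h).le
    exact mul_le_mul_of_nonneg_left (Real.exp_le_exp.2 hgle) hC₁.le
  · intro a ha b hb hab
    rw [hB' a, hB' b]
    have := hgmono (le_of_lt ha.out) (le_of_lt hb.out) hab
    exact mul_lt_mul_of_pos_left (Real.exp_lt_exp.2 this) hC₁
end
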